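/- Let φ = (1+√5)/2, c(m) = m/(φ+2), s(m) = √(φ·m/(5(φ+2))). Fix a real number x, and for each n let k_n = ⌊c(n) + x·s(n)⌋. Then, as n → ∞, the quantity s(n+1)·(√5/φ)·√((n - k_n)/(k_n·(n - 2k_n))) converges to 1. (Equivalently, the prefactor N_n(k) = (1/√(2π))·√((n-k)/(k(n-2k)))·(√5/φ) from Stirling's formula, evaluated at k = k_n, satisfies N_n(k_n)·√(2π·s(n+1)²) → 1.) -/

import Mathlib

open Filter Topology

/-- The golden mean `φ = (1+√5)/2`. -/
noncomputable def phi : ℝ := (1 + Real.sqrt 5) / 2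

/-- Leading-order mean `c(m) = m/(φ+2)` of the number of non-forced Zeckendorf
summands on `[F_m, F_{m+1})`. -/
noncomputable def cLead (m : ℕ) : ℝ := (m : ℝ) / (phi + 2)

/-- Leading-order standard deviation `s(m) = √(φ·m/(5(φ+2)))`. -/
noncomputable def sLead (m : ℕ) : ℝ := Real.sqrt (phi * (m : ℝ) / (5 * (phi + 2)))

lemma sqrt5_sq : Real.sqrt 5 ^ 2 = 5 := Real.sq_sqrt (by norm_num)

lemma phi_gt_one : 1 < phi := by
  have h := Real.sqrt_nonneg 5
  have h2 := sqrt5_sq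
  unfold phi; nlinarith

lemma phi_pos : 0 < phi := lt_trans one_pos phi_gt_one

lemma phi_add_two_pos : 0 < phi + 2 := by linarith [phi_pos]

lemma phi_sq : phi ^ 2 = phi + 1 := by
  have h2 := sqrt5_sq
  unfold phi; nlinarith [Real.sqrt_nonneg 5]

lemma s_div_tendsto : Tendsto (fun n : ℕ => sLead n / n) atTop (𝓝 0) := by
  set a : ℝ := phi / (5 * (phi + 2)) with ha
  have hapos : 0 < a := div_pos phi_pos (by nlinarith [phi_add_two_pos])
  have heq : ∀ᶠ n : ℕ in atTop, sLead n / n = Real.sqrt (a / n) := by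
    filter_upwards [eventually_ge_atTop 1] with n hn
    have hn0 : (0:ℝ) < n := by exact_mod_cast hn
    have key : Real.sqrt (a / n) * n = Real.sqrt (phi * n / (5 * (phi + 2))) := by
      rw [← Real.sqrt_sq hn0.le, ← Real.sqrt_mul (by positivity)]
      congr 1
      field_simp
      rw [Real.sq_sqrt (by positivity), ha]
      field_simp
    rw [sLead, ← key, mul_div_cancel_right₀ _ hn0.ne']
  have h0 : Tendsto (fun n : ℕ => a / n) atTop (𝓝 0) :=
    tendsto_const_div_atTop_nhds_zero_nat a
  have h1 := h0.sqrt
  rw [Real.sqrt_zero] at h1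
  exact Tendsto.congr' (heq.mono fun n h => h.symm) h1

lemma floor_ratio_tendsto (x : ℝ) :
    Tendsto (fun n : ℕ => ((⌊cLead n + x * sLead n⌋₊ : ℕ) : ℝ) / n) atTop
      (𝓝 ((phi + 2)⁻¹)) := by
  set c : ℝ := (phi + 2)⁻¹ with hc
  have hcpos : 0 < c := inv_pos.mpr phi_add_two_pos
  have hsx : Tendsto (fun n : ℕ => x * (sLead n / n)) atTop (𝓝 0) := by
    simpa using (s_div_tendsto.const_mul x)
  have hupper : Tendsto (fun n : ℕ => (cLead n + x * sLead n) / n) atTop (𝓝 c) := by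
    have heq : ∀ᶠ n : ℕ in atTop,
        c + x * (sLead n / n) = (cLead n + x * sLead n) / n := by
      filter_upwards [eventually_ge_atTop 1] with n hn
      have hn0 : (0:ℝ) < n := by exact_mod_cast hn
      rw [cLead, hc]
      field_simp
    have h := (tendsto_const_nhds : Tendsto (fun _ : ℕ => c) atTop (𝓝 c)).add hsx
    rw [add_zero] at h
    exact Tendsto.congr' heq h
  have hlower : Tendsto (fun n : ℕ => (cLead n + x * sLead n - 1) / n) atTop (𝓝 c) := by
    have hinv : Tendsto (fun n : ℕ => (1:ℝ) / n) atTop (𝓝 0) :=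
      tendsto_const_div_atTop_nhds_zero_nat 1
    have heq : ∀ᶠ n : ℕ in atTop,
        (cLead n + x * sLead n) / n - 1 / n = (cLead n + x * sLead n - 1) / n := by
      filter_upwards [eventually_ge_atTop 1] with n hn
      have hn0 : (0:ℝ) < n := by exact_mod_cast hn
      field_simp
    have h := hupper.sub hinv
    rw [sub_zero] at h
    exact Tendsto.congr' heq h
  have hpos : ∀ᶠ n : ℕ in atTop, 0 ≤ cLead n + x * sLead n := by
    have hev := hupper.eventually (eventually_gt_nhds (show c / 2 < c by linarith))
    filter_upwards [hev, eventually_ge_atTop 1] with n h1 h2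
    have hn0 : (0:ℝ) < n := by exact_mod_cast h2
    have := (lt_div_iff₀ hn0).mp h1
    nlinarith
  refine tendsto_of_tendsto_of_tendsto_of_le_of_le' hlower hupper ?_ ?_
  · filter_upwards [eventually_ge_atTop 1] with n hn
    have hn0 : (0:ℝ) < n := by exact_mod_cast hn
    have h := Nat.lt_floor_add_one (cLead n + x * sLead n)
    exact (div_le_div_iff_of_pos_right hn0).mpr (by linarith)
  · filter_upwards [hpos, eventually_ge_atTop 1] with n hp hn
    have hn0 : (0:ℝ) < n := by exact_mod_cast hn
    exact (div_le_div_iff_of_pos_right hn0).mpr (Nat.floor_le hp)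

theorem prefactor_limit (x : ℝ) :
    Tendsto (fun n : ℕ =>
        sLead (n + 1) * (Real.sqrt 5 / phi) *
          Real.sqrt (((n : ℝ) - (⌊cLead n + x * sLead n⌋₊ : ℝ)) /
            ((⌊cLead n + x * sLead n⌋₊ : ℝ) *
              ((n : ℝ) - 2 * (⌊cLead n + x * sLead n⌋₊ : ℝ)))))
      atTop (nhds 1) := by
  set c : ℝ := (phi + 2)⁻¹ with hc
  have hcpos : 0 < c := inv_pos.mpr phi_add_two_pos
  have hcm : c * (phi + 2) = 1 := inv_mul_cancel₀ phi_add_two_pos.ne'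
  have h2c : 2 * c < 1 := by nlinarith [phi_gt_one]
  have hka := floor_ratio_tendsto x
  rw [← hc] at hka
  set k : ℕ → ℝ := fun n => ((⌊cLead n + x * sLead n⌋₊ : ℕ) : ℝ) with hkdef
  have hnum : Tendsto (fun n : ℕ => 1 - k n / n) atTop (𝓝 (1 - c)) :=
    tendsto_const_nhds.sub hka
  have hden : Tendsto (fun n : ℕ => (phi + 2) * phi * (k n / n * (1 - 2 * (k n / n)))) atTop
      (𝓝 ((phi + 2) * phi * (c * (1 - 2 * c)))) :=
    tendsto_const_nhds.mul (hka.mul (tendsto_const_nhds.sub (hka.const_mul 2)))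
  have hden0 : (phi + 2) * phi * (c * (1 - 2 * c)) ≠ 0 := by
    have h : 0 < (phi + 2) * phi * (c * (1 - 2 * c)) := by
      apply mul_pos (mul_pos phi_add_two_pos phi_pos)
      exact mul_pos hcpos (by linarith)
    exact h.ne'
  have hfrac : Tendsto (fun n : ℕ => ((n:ℝ) + 1) / n) atTop (𝓝 1) := by
    have h0 := tendsto_const_div_atTop_nhds_zero_nat (1:ℝ)
    have h2 : ∀ᶠ n : ℕ in atTop, 1 + 1 / (n:ℝ) = ((n:ℝ) + 1) / n := by
      filter_upwards [eventually_ge_atTop 1] with n hn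
      have hn0 : (0:ℝ) < n := by exact_mod_cast hn
      field_simp
    have h3 := (tendsto_const_nhds : Tendsto (fun _ : ℕ => (1:ℝ)) atTop (𝓝 1)).add h0
    rw [add_zero] at h3
    exact Tendsto.congr' h2 h3
  have hGc : (1 - c) / ((phi + 2) * phi * (c * (1 - 2 * c))) = 1 := by
    rw [hc]
    have hsq := phi_sq
    have hp2 : phi + 2 ≠ 0 := phi_add_two_pos.ne'
    have hp0 : phi ≠ 0 := phi_pos.ne'
    field_simp
    rw [div_eq_iff (by simpa using hp0)]
    linear_combination (-1) * phi_sq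
  have hF : Tendsto (fun n : ℕ => ((n:ℝ) + 1) / n *
      ((1 - k n / n) / ((phi + 2) * phi * (k n / n * (1 - 2 * (k n / n)))))) atTop (𝓝 1) := by
    have h := hfrac.mul (hnum.div hden hden0)
    rw [hGc, mul_one] at h
    exact h
  have hev : ∀ᶠ n : ℕ in atTop,
      sLead (n + 1) * (Real.sqrt 5 / phi) *
        Real.sqrt (((n : ℝ) - k n) / (k n * ((n : ℝ) - 2 * k n)))
      = Real.sqrt (((n:ℝ) + 1) / n *
          ((1 - k n / n) / ((phi + 2) * phi * (k n / n * (1 - 2 * (k n / n)))))) := by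
    have hev1 := hka.eventually (eventually_gt_nhds (show c / 2 < c by linarith))
    have hev2 := hka.eventually (eventually_lt_nhds (show c < 1/2 by linarith))
    filter_upwards [hev1, hev2, eventually_ge_atTop 1] with n h1 h2 hn
    have hn0 : (0:ℝ) < n := by exact_mod_cast hn
    have hkpos : 0 < k n := by nlinarith [(lt_div_iff₀ hn0).mp h1]
    have hk2 : 2 * k n < n := by nlinarith [(div_lt_iff₀ hn0).mp h2]
    have hs5 : Real.sqrt 5 / phi = Real.sqrt (5 / phi ^ 2) := by
      rw [Real.sqrt_div (by norm_num : (0:ℝ) ≤ 5), Real.sqrt_sq phi_pos.le]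
    have hA : 0 ≤ phi * (((n:ℕ) + 1 : ℕ) : ℝ) / (5 * (phi + 2)) :=
      div_nonneg (mul_nonneg phi_pos.le (by positivity)) (by nlinarith [phi_add_two_pos])
    have hB : 0 ≤ phi * (((n:ℕ) + 1 : ℕ) : ℝ) / (5 * (phi + 2)) * (5 / phi ^ 2) :=
      mul_nonneg hA (div_nonneg (by norm_num) (sq_nonneg phi))
    rw [hs5, sLead, ← Real.sqrt_mul hA, ← Real.sqrt_mul hB]
    congr 1
    push_cast
    have hphi0 := phi_pos.ne'
    have hp2 := phi_add_two_pos.ne'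
    have hnk : (n:ℝ) - 2 * k n ≠ 0 := by linarith
    field_simp
  refine Tendsto.congr' (hev.mono fun n h => h.symm) ?_
  have h := hF.sqrt
  rw [Real.sqrt_one] at h
  exact h
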